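/- Let G be an abelian group and A, B finite nonempty subsets of G with A + B ≠ G. If A is not contained in any coset of a proper subgroup of G (i.e., the closure of A is all of G), then |A+B| ≥ (1/2)|A| + |B|. -/

import Mathlib

open Pointwise

universe u

variable {G : Type u} [AddCommGroup G]

/-- The stabilizer of a set under translation. -/
def myStab (S : Set G) : AddSubgroup G where
  carrier := {g : G | S + {g} = S}
  zero_mem' := by simp
  add_mem' := by
    intro g h hg hh
    simp only [Set.mem_setOf_eq] at *
    rw [show ({g + h} : Set G) = {g} + {h} by simp [Set.singleton_add_singleton],
      ← add_assoc, hg, hh]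
  neg_mem' := by
    intro g hg
    simp only [Set.mem_setOf_eq] at *
    conv_lhs => rw [← hg]
    rw [add_assoc, show ({g} + {-g} : Set G) = {0} by simp [Set.singleton_add_singleton]]
    simp

lemma mem_myStab {S : Set G} {g : G} : g ∈ myStab S ↔ S + {g} = S := Iff.rfl

lemma add_singleton_eq_of_mem_myStab {S : Set G} {g : G} (h : g ∈ myStab S) : S + {g} = S := h

/-- Saturation: if K ≤ myStab S then S + K = S. -/
lemma add_coe_eq_of_le_myStab {S : Set G} {K : AddSubgroup G} (h : K ≤ myStab S) :
    S + (K : Set G) = S := by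
  apply Set.Subset.antisymm
  · rintro x ⟨s, hs, k, hk, rfl⟩
    have := h hk
    rw [mem_myStab] at this
    rw [← this]
    exact ⟨s, hs, k, rfl, rfl⟩
  · intro s hs
    exact ⟨s, hs, 0, K.zero_mem, by simp⟩

lemma subset_add_coe (X : Set G) (K : AddSubgroup G) : X ⊆ X + (K : Set G) :=
  fun x hx => ⟨x, hx, 0, K.zero_mem, by simp⟩

/-- myStab of a finite nonempty set is finite (as a set). -/
lemma myStab_finite {S : Set G} (hS : S.Finite) (hne : S.Nonempty) :
    ((myStab S : AddSubgroup G) : Set G).Finite := by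
  obtain ⟨s, hs⟩ := hne
  have hsub : ((myStab S : AddSubgroup G) : Set G) ⊆ (-s) +ᵥ S := by
    intro g hg
    have : S + {g} = S := hg
    have hmem : s + g ∈ S := by rw [← this]; exact ⟨s, hs, g, rfl, rfl⟩
    rw [Set.mem_vadd_set]
    refine ⟨s + g, hmem, ?_⟩
    show -s + (s + g) = g
    abel
  exact (hS.vadd_set).subset hsub

lemma ncard_singleton_add (g : G) (X : Set G) : ({g} + X).ncard = X.ncard := by
  rw [Set.singleton_add]; exact Set.ncard_image_of_injective _ (add_right_injective g)

lemma coeK_add_coeK (K : AddSubgroup G) : (K : Set G) + (K : Set G) = (K : Set G) := by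
  apply Set.Subset.antisymm
  · rintro x ⟨a, ha, b, hb, rfl⟩; exact K.add_mem ha hb
  · intro k hk; exact ⟨k, hk, 0, K.zero_mem, by simp⟩

lemma sat_diff {K : AddSubgroup G} {Y Z : Set G} (hY : Y + (K : Set G) = Y)
    (hZ : Z + (K : Set G) = Z) : (Y \ Z) + (K : Set G) = Y \ Z := by
  apply Set.Subset.antisymm
  · rintro x ⟨z, hz, k, hk, rfl⟩
    refine ⟨by rw [← hY]; exact ⟨z, hz.1, k, hk, rfl⟩, fun hmem => hz.2 ?_⟩
    rw [← hZ]
    exact ⟨z + k, hmem, -k, K.neg_mem hk, add_neg_cancel_right z k⟩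
  · intro z hz; exact ⟨z, hz, 0, K.zero_mem, by simp⟩

lemma image_coe_eq_zero (K : AddSubgroup G) :
    (QuotientAddGroup.mk' K) '' (K : Set G) = {0} := by
  ext x
  simp only [Set.mem_image, Set.mem_singleton_iff]
  constructor
  · rintro ⟨k, hk, rfl⟩
    exact (QuotientAddGroup.eq_zero_iff k).2 hk
  · rintro rfl
    exact ⟨0, K.zero_mem, map_zero _⟩

lemma image_add_coe {K : AddSubgroup G} (X : Set G) :
    (QuotientAddGroup.mk' K) '' (X + (K : Set G)) = (QuotientAddGroup.mk' K) '' X := by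
  rw [Set.image_add, image_coe_eq_zero]
  simp

/-- counting lemma: a K-saturated finite set has size |K| * (image size). -/
lemma ncard_saturated_aux {K : AddSubgroup G} (hKfin : (K : Set G).Finite) :
    ∀ n (Y : Set G), Y.ncard ≤ n → Y.Finite → Y + (K : Set G) = Y →
      Y.ncard = (K : Set G).ncard * ((QuotientAddGroup.mk' K) '' Y).ncard := by
  intro n
  induction n with
  | zero =>
    intro Y hYn hYfin hsat
    have : Y = ∅ := by
      rw [← Set.ncard_eq_zero hYfin]; omega
    subst this; simp
  | succ n ih =>
    intro Y hYn hYfin hsat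
    rcases Y.eq_empty_or_nonempty with rfl | ⟨y, hy⟩
    · simp
    · set π := (QuotientAddGroup.mk' K)
      set C : Set G := {y} + (K : Set G) with hC
      have hCsub : C ⊆ Y := by
        rw [← hsat]
        exact Set.add_subset_add_right (by simpa using hy)
      have hCfin : C.Finite := (Set.finite_singleton y).add hKfin
      have hCcard : C.ncard = (K : Set G).ncard := ncard_singleton_add _ _
      have hKpos : 0 < (K : Set G).ncard := (Set.ncard_pos hKfin).2 ⟨0, K.zero_mem⟩
      have hCsat : C + (K : Set G) = C := by
        rw [hC, add_assoc, coeK_add_coeK]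
      have hY'sat : (Y \ C) + (K : Set G) = Y \ C := sat_diff hsat hCsat
      have hY'fin : (Y \ C).Finite := hYfin.diff
      have hsplit : Y.ncard = (Y \ C).ncard + C.ncard := by
        rw [Set.ncard_diff hCsub hCfin]
        have := Set.ncard_le_ncard hCsub hYfin
        omega
      have hY'le : (Y \ C).ncard ≤ n := by
        have : 0 < C.ncard := by rw [hCcard]; exact hKpos
        omega
      have hrec := ih (Y \ C) hY'le hY'fin hY'sat
      -- images
      have himgC : π '' C = {π y} := by
        rw [hC, Set.image_add, image_coe_eq_zero]
        simp
      have hdisj : Disjoint (π '' (Y \ C)) {π y} := by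
        rw [Set.disjoint_singleton_right]
        rintro ⟨z, hz, hzeq⟩
        apply hz.2
        have : -z + y ∈ K := by
          have h2 : π z = π y := hzeq
          rw [QuotientAddGroup.mk'_eq_mk'] at h2
          obtain ⟨k', hk', hEq⟩ := h2
          have hk2 : -z + y = k' := by rw [← hEq]; abel
          rwa [hk2]

        rw [hC]
        have hyz : z = y + -(-z + y) := by abel
        exact ⟨y, rfl, -(-z + y), K.neg_mem this, hyz.symm⟩
      have himgY : π '' Y = π '' (Y \ C) ∪ {π y} := by
        rw [← himgC, ← Set.image_union]
        congr 1
        rw [Set.diff_union_of_subset hCsub]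
      have himgcard : (π '' Y).ncard = (π '' (Y \ C)).ncard + 1 := by
        rw [himgY, Set.ncard_union_eq hdisj (hY'fin.image π) (Set.finite_singleton _)]
        simp
      rw [hsplit, hrec, hCcard, himgcard]
      ring

lemma ncard_saturated {K : AddSubgroup G} (hKfin : (K : Set G).Finite) {Y : Set G}
    (hYfin : Y.Finite) (hsat : Y + (K : Set G) = Y) :
    Y.ncard = (K : Set G).ncard * ((QuotientAddGroup.mk' K) '' Y).ncard :=
  ncard_saturated_aux hKfin Y.ncard Y le_rfl hYfin hsat

lemma le_ncard_add_left (X Y : Set G) (hX : X.Finite) (hY : Y.Finite) (hYne : Y.Nonempty) :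
    X.ncard ≤ (X + Y).ncard := by
  obtain ⟨y, hy⟩ := hYne
  have hsub : X + {y} ⊆ X + Y := Set.add_subset_add_left (by simpa using hy)
  have h1 : (X + {y}).ncard = X.ncard := by
    rw [add_comm, Set.singleton_add]
    exact Set.ncard_image_of_injective _ (add_right_injective y)
  rw [← h1]
  exact Set.ncard_le_ncard hsub (hX.add hY)
lemma le_ncard_add_right (X Y : Set G) (hX : X.Finite) (hY : Y.Finite) (hXne : X.Nonempty) :
    Y.ncard ≤ (X + Y).ncard := by
  rw [add_comm]
  exact le_ncard_add_left Y X hY hX hXne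
lemma meas_lt_1 {s' a' s a : ℕ} (h1 : s' ≤ s) (h3 : a' < a) :
    s' * (s' + 1) + a' < s * (s + 1) + a := by
  have : s' * (s' + 1) ≤ s * (s + 1) := Nat.mul_le_mul (by omega) (by omega)
  omega
lemma meas_lt_2 {s' a' s a : ℕ} (h1 : s' < s) (h2 : a' ≤ s') :
    s' * (s' + 1) + a' < s * (s + 1) + a := by
  have h5 : (s' + 1) * (s' + 2) ≤ s * (s + 1) := Nat.mul_le_mul (by omega) (by omega)
  nlinarith

/-- The endgame lemma: if a translate `a + B + K` sits inside `A+B` but `K` does not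
stabilize `A+B`, then `|A+B| ≥ |B| + |K|`. -/
lemma endgame {A B : Set G} (hAfin : A.Finite) (hBfin : B.Finite)
    (hBne : B.Nonempty)
    {K : AddSubgroup G} (hKfin : (K : Set G).Finite) {a : G} (ha : a ∈ A)
    (hsub : {a} + B + (K : Set G) ⊆ A + B)
    (hnst : ¬ K ≤ myStab (A + B)) :
    B.ncard + (K : Set G).ncard ≤ (A + B).ncard := by
  set S := A + B with hS
  have hSfin : S.Finite := hAfin.add hBfin
  set W := B + (K : Set G) with hW
  have hWfin : W.Finite := hBfin.add hKfin
  have hWsat : W + (K : Set G) = W := by rw [hW, add_assoc, coeK_add_coeK]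
  have hBW : B ⊆ W := fun b hb => ⟨b, hb, 0, K.zero_mem, by simp⟩
  have hβW : B.ncard ≤ W.ncard := Set.ncard_le_ncard hBW hWfin
  have haW : {a} + W ⊆ S := by
    rw [hW, ← add_assoc]; exact hsub
  by_cases hcase : ∀ a' ∈ A, {a'} + W ⊆ {a} + W
  · -- Case B: S is K-stable, contradiction
    exfalso
    apply hnst
    have hSK : S + (K : Set G) = S := by
      apply Set.Subset.antisymm
      · rintro x ⟨s, hs, k, hk, rfl⟩
        rcases hs with ⟨a', ha', b, hb, rfl⟩
        apply haW
        apply hcase a' ha'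
        exact ⟨a', rfl, b + k, ⟨b, hb, k, hk, rfl⟩, (add_assoc a' b k).symm⟩
      · intro s hs; exact ⟨s, hs, 0, K.zero_mem, by simp⟩
    intro k hk
    rw [mem_myStab]
    apply Set.eq_of_subset_of_ncard_le
    · intro x hx
      rw [← hSK]
      rcases hx with ⟨s, hs, k', hk', rfl⟩
      rcases hk' with rfl
      exact ⟨s, hs, _, hk, rfl⟩
    · rw [show S + {k} = {k} + S by rw [add_comm], ncard_singleton_add]
    · exact hSfin
  · -- Case A
    push_neg at hcase
    obtain ⟨a', ha', hna⟩ := hcase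
    set U := ({a'} + W) \ ({a} + W) with hU
    have hUne : U.Nonempty := Set.diff_nonempty.2 hna
    have haWsat : ∀ x : G, ({x} + W) + (K : Set G) = {x} + W := by
      intro x; rw [add_assoc, hWsat]
    have hUsat : U + (K : Set G) = U := sat_diff (haWsat a') (haWsat a)
    have hUfin : U.Finite := (((Set.finite_singleton a').add hWfin).diff)
    obtain ⟨u, hu⟩ := hUne
    have hkU : (K : Set G).ncard ≤ U.ncard := by
      have : {u} + (K : Set G) ⊆ U := by
        rw [← hUsat]
        exact Set.add_subset_add_right (by simpa using hu)
      calc (K : Set G).ncard = ({u} + (K : Set G)).ncard := (ncard_singleton_add _ _).symm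
        _ ≤ U.ncard := Set.ncard_le_ncard this hUfin
    -- |U \ S| ≤ |W| - β
    have haB : {a'} + B ⊆ S := by
      rintro x ⟨y, hy, b, hb, rfl⟩
      rw [Set.mem_singleton_iff] at hy
      exact ⟨y, by rw [hy]; exact ha', b, hb, rfl⟩
    have hUdiff : U \ S ⊆ ({a'} + W) \ ({a'} + B) := by
      intro x hx
      exact ⟨hx.1.1, fun hmem => hx.2 (haB hmem)⟩
    have hsubBW : {a'} + B ⊆ {a'} + W := Set.add_subset_add_left hBW
    have hf3 : (U \ S).ncard + B.ncard ≤ W.ncard := by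
      have h1 : (U \ S).ncard ≤ (({a'} + W) \ ({a'} + B)).ncard :=
        Set.ncard_le_ncard hUdiff (((Set.finite_singleton a').add hWfin).diff)
      rw [Set.ncard_diff hsubBW ((Set.finite_singleton a').add hBfin),
        ncard_singleton_add, ncard_singleton_add] at h1
      omega
    have hf2 : U.ncard ≤ (U \ S).ncard + (U ∩ S).ncard := by
      have : U ⊆ (U \ S) ∪ (U ∩ S) := by
        intro x hx
        by_cases h : x ∈ S
        · exact Or.inr ⟨hx, h⟩
        · exact Or.inl ⟨hx, h⟩
      calc U.ncard ≤ ((U \ S) ∪ (U ∩ S)).ncard :=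
            Set.ncard_le_ncard this ((hUfin.diff).union (hUfin.inter_of_left _))
        _ ≤ (U \ S).ncard + (U ∩ S).ncard := Set.ncard_union_le _ _
    have hf1 : W.ncard + (U ∩ S).ncard ≤ S.ncard := by
      have hdisj : Disjoint ({a} + W) (U ∩ S) := by
        rw [Set.disjoint_left]
        intro x hx hx2
        exact hx2.1.2 hx
      have hsubS : ({a} + W) ∪ (U ∩ S) ⊆ S := by
        apply Set.union_subset haW
        intro x hx; exact hx.2
      calc W.ncard + (U ∩ S).ncard = ({a} + W).ncard + (U ∩ S).ncard := by
            rw [ncard_singleton_add]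
        _ = (({a} + W) ∪ (U ∩ S)).ncard :=
            (Set.ncard_union_eq hdisj ((Set.finite_singleton a).add hWfin)
              (hUfin.inter_of_left _)).symm
        _ ≤ S.ncard := Set.ncard_le_ncard hsubS hSfin
    omega

lemma myStab_image_mk_bot {S' : Set G} (hfin : S'.Finite) :
    myStab ((QuotientAddGroup.mk' (myStab S')) '' S') = ⊥ := by
  set K := myStab S' with hK
  set π := QuotientAddGroup.mk' K with hπ
  apply (AddSubgroup.eq_bot_iff_forall _).2
  intro gbar hgbar
  obtain ⟨g, rfl⟩ := QuotientAddGroup.mk'_surjective K gbar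
  suffices hg : g ∈ K by exact (QuotientAddGroup.eq_zero_iff g).2 hg
  rw [hK, mem_myStab]
  have hstab : π '' S' + {π g} = π '' S' := hgbar
  have hsat : S' + (K : Set G) = S' := add_coe_eq_of_le_myStab le_rfl
  apply Set.eq_of_subset_of_ncard_le
  · rintro x ⟨s, hs, g', hg', rfl⟩
    rw [Set.mem_singleton_iff] at hg'
    show s + g' ∈ S'
    rw [hg']
    have hmem : π (s + g) ∈ π '' S' := by
      rw [← hstab]
      exact ⟨π s, ⟨s, hs, rfl⟩, π g, rfl, (map_add π s g).symm⟩
    obtain ⟨s', hs', heq⟩ := hmem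
    rw [QuotientAddGroup.mk'_eq_mk'] at heq
    obtain ⟨z, hz, hzeq⟩ := heq
    rw [← hsat]
    exact ⟨s', hs', z, hz, hzeq⟩
  · have : (S' + {g}).ncard = S'.ncard := by
      rw [add_comm]; exact ncard_singleton_add g S'
    omega
  · exact hfin


/-- The key Olson-type disjunction, proved by induction on `|A+B|*(|A+B|+1) + |A|`. -/
lemma omega_lemma : ∀ (n : ℕ) (G : Type u) (_ : AddCommGroup G) (A B : Set G),
    A.Finite → B.Finite → A.Nonempty → B.Nonempty →
    ((A + B).ncard * ((A + B).ncard + 1) + A.ncard ≤ n) →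
    (A.ncard + 2 * B.ncard ≤ 2 * (A + B).ncard) ∨ myStab (A + B) ≠ ⊥ ∨ A.ncard = 1 := by
  intro n
  induction n using Nat.strong_induction_on with
  | _ n ih =>
    intro G instG A B hAfin hBfin hAne hBne hmeas
    by_cases hst : myStab (A + B) = ⊥
    swap
    · exact Or.inr (Or.inl hst)
    by_cases hα1 : A.ncard = 1
    · exact Or.inr (Or.inr hα1)
    left
    set S := A + B with hS
    have hSfin : S.Finite := hAfin.add hBfin
    have hSne : S.Nonempty := hAne.add hBne
    have hαpos : 0 < A.ncard := (Set.ncard_pos hAfin).2 hAne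
    have hα2 : 2 ≤ A.ncard := by omega
    have hβpos : 0 < B.ncard := (Set.ncard_pos hBfin).2 hBne
    have hαS : A.ncard ≤ S.ncard := le_ncard_add_left A B hAfin hBfin hBne
    have hβS : B.ncard ≤ S.ncard := le_ncard_add_right A B hAfin hBfin hAne
    by_cases hc1 : ∃ a ∈ A, ∃ b ∈ B, ¬(A + {b} ⊆ B + {a})
    · -- main transform case
      obtain ⟨a, ha, b, hb, hnsub⟩ := hc1
      set f : G → G := fun y => y + b - a with hf
      set A' : Set G := A ∩ {x | x + b ∈ B + {a}} with hA'
      set B' : Set G := B ∪ f '' (A \ A') with hB'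
      have hA'sub : A' ⊆ A := Set.inter_subset_left
      have haA' : a ∈ A' := ⟨ha, ⟨b, hb, a, rfl, add_comm b a⟩⟩
      have hA'fin : A'.Finite := hAfin.subset hA'sub
      have hA'ne : A'.Nonempty := ⟨a, haA'⟩
      have hB'fin : B'.Finite := hBfin.union ((hAfin.diff : (A \ A').Finite).image f)
      have hB'ne : B'.Nonempty := hBne.mono Set.subset_union_left
      -- d' and cardinalities
      set d' : ℕ := (A \ A').ncard with hd'
      have hdiffne : (A \ A').Nonempty := by
        rw [Set.not_subset] at hnsub
        obtain ⟨z, hz, hz2⟩ := hnsub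
        obtain ⟨x, hx, b'', hb'', rfl⟩ := hz
        rw [Set.mem_singleton_iff] at hb''
        exact ⟨x, hx, fun hmem => hz2 (by rw [hb'']; exact hmem.2)⟩
      have hd'pos : 1 ≤ d' := (Set.ncard_pos (hAfin.diff : (A \ A').Finite)).2 hdiffne
      have hcardA' : A'.ncard + d' = A.ncard := by
        rw [hd', Set.ncard_diff hA'sub hA'fin]
        have := Set.ncard_le_ncard hA'sub hAfin
        omega
      have hfinj : Function.Injective f := by
        intro x y hxy
        simpa [hf] using hxy
      -- f '' (A \ A') is disjoint from B
      have hfdisj : Disjoint B (f '' (A \ A')) := by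
        rw [Set.disjoint_right]
        rintro x ⟨y, hy, rfl⟩ hmem
        apply hy.2
        refine ⟨hy.1, ?_⟩
        show y + b ∈ B + {a}
        exact ⟨y + b - a, hmem, a, rfl, by abel⟩
      have hcardB' : B'.ncard = B.ncard + d' := by
        rw [hB', Set.ncard_union_eq hfdisj hBfin ((hAfin.diff : (A \ A').Finite).image f),
          Set.ncard_image_of_injective _ hfinj]
      -- sumset containment
      set S' : Set G := A' + B' with hS'
      have hS'sub : S' ⊆ S := by
        rw [hS', hB', Set.add_union]
        apply Set.union_subset
        · exact Set.add_subset_add_right hA'sub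
        · rintro x ⟨x', hx', z, ⟨y, hy, rfl⟩, rfl⟩
          have hx'B : x' + b - a ∈ B := by
            have := hx'.2
            obtain ⟨b', hb', a'', ha'', heq⟩ := this
            rw [Set.mem_singleton_iff] at ha''
            have h4 : b' + a = x' + b := by rw [← ha'']; exact heq
            have h5 : x' + b - a = b' := by rw [← h4]; abel
            rwa [h5]
          refine ⟨y, hy.1, x' + b - a, hx'B, ?_⟩
          show y + (x' + b - a) = x' + f y
          show y + (x' + b - a) = x' + (y + b - a); abel
      have hS'fin : S'.Finite := hA'fin.add hB'fin
      have hS'ne : S'.Nonempty := hA'ne.add hB'ne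
      have hS'S : S'.ncard ≤ S.ncard := Set.ncard_le_ncard hS'sub hSfin
      have hB'S' : B'.ncard ≤ S'.ncard := le_ncard_add_right A' B' hA'fin hB'fin hA'ne
      by_cases hbig : A.ncard ≤ 2 * d'
      · -- case 2a
        omega
      · -- case 2b : 2*d' < α
        have hA'lt : A'.ncard < A.ncard := by omega
        have hA'S' : A'.ncard ≤ S'.ncard := le_ncard_add_left A' B' hA'fin hB'fin hB'ne
        -- apply IH to (A', B')
        have hmeas' : S'.ncard * (S'.ncard + 1) + A'.ncard < n :=
          lt_of_lt_of_le (meas_lt_1 hS'S hA'lt) hmeas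
        have IH1 := ih _ hmeas' G instG A' B' hA'fin hB'fin hA'ne hB'ne le_rfl
        rw [← hS'] at IH1
        rcases IH1 with IH1 | IH1 | IH1
        · -- (i)
          omega
        · -- (iii) : stabilizer of S' nontrivial
          set K := myStab S' with hK
          have hKfin : ((K : AddSubgroup G) : Set G).Finite := myStab_finite hS'fin hS'ne
          obtain ⟨κ, hκK, hκ0⟩ : ∃ x ∈ K, x ≠ 0 := by
            by_contra hc
            push_neg at hc
            exact IH1 ((AddSubgroup.eq_bot_iff_forall K).2 hc)
          have hk2 : 2 ≤ (K : Set G).ncard := by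
            have hsub2 : ({0, κ} : Set G) ⊆ (K : Set G) := by
              intro x hx
              rcases hx with rfl | hx
              · exact K.zero_mem
              · rw [Set.mem_singleton_iff] at hx; subst hx; exact hκK
            calc 2 = ({0, κ} : Set G).ncard := (Set.ncard_pair (Ne.symm hκ0)).symm
              _ ≤ (K : Set G).ncard := Set.ncard_le_ncard hsub2 hKfin
          have hsat : S' + (K : Set G) = S' := add_coe_eq_of_le_myStab le_rfl
          set π := QuotientAddGroup.mk' K with hπ
          set k := (K : Set G).ncard with hkdef
          have hcount : S'.ncard = k * (π '' S').ncard := ncard_saturated hKfin hS'fin hsat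
          have hπS'ne : (π '' S').Nonempty := hS'ne.image π
          have hπS'fin : (π '' S').Finite := hS'fin.image π
          have hπS'pos : 0 < (π '' S').ncard := (Set.ncard_pos hπS'fin).2 hπS'ne
          have hπS'lt : (π '' S').ncard < S'.ncard := by
            rw [hcount]
            calc (π '' S').ncard = 1 * (π '' S').ncard := (one_mul _).symm
              _ < k * (π '' S').ncard := by
                  exact (Nat.mul_lt_mul_right hπS'pos).2 (by omega)
          have hsplitimg : π '' S' = π '' A' + π '' B' := by
            rw [hS']; exact Set.image_add _
          have hπA'fin : (π '' A').Finite := hA'fin.image π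
          have hπB'fin : (π '' B').Finite := hB'fin.image π
          have hπA'ne : (π '' A').Nonempty := hA'ne.image π
          have hπB'ne : (π '' B').Nonempty := hB'ne.image π
          have hπA'le : (π '' A').ncard ≤ (π '' S').ncard := by
            rw [hsplitimg]
            exact le_ncard_add_left _ _ hπA'fin hπB'fin hπB'ne
          have hmeas'' : (π '' A' + π '' B').ncard * ((π '' A' + π '' B').ncard + 1)
              + (π '' A').ncard < n := by
            rw [← hsplitimg]
            apply lt_of_lt_of_le _ hmeas
            exact meas_lt_2 (lt_of_lt_of_le hπS'lt hS'S) hπA'le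
          have IH2 := ih _ hmeas'' (G ⧸ K) inferInstance (π '' A') (π '' B')
            hπA'fin hπB'fin hπA'ne hπB'ne le_rfl
          rw [← hsplitimg] at IH2
          rcases IH2 with IH2 | IH2 | IH2
          · -- (iii-a) : lift the bound
            -- k * |π A'| = |A' + K| ≥ |A'|, etc.
            have hsatA : (A' + (K : Set G)) + (K : Set G) = A' + (K : Set G) := by
              rw [add_assoc, coeK_add_coeK]
            have hcountA : (A' + (K : Set G)).ncard = k * (π '' A').ncard := by
              rw [ncard_saturated hKfin (hA'fin.add hKfin) hsatA, image_add_coe]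
            have hleA : A'.ncard ≤ k * (π '' A').ncard := by
              rw [← hcountA]
              exact Set.ncard_le_ncard (subset_add_coe A' K) (hA'fin.add hKfin)
            have hsatB : (B' + (K : Set G)) + (K : Set G) = B' + (K : Set G) := by
              rw [add_assoc, coeK_add_coeK]
            have hcountB : (B' + (K : Set G)).ncard = k * (π '' B').ncard := by
              rw [ncard_saturated hKfin (hB'fin.add hKfin) hsatB, image_add_coe]
            have hleB : B'.ncard ≤ k * (π '' B').ncard := by
              rw [← hcountB]
              exact Set.ncard_le_ncard (subset_add_coe B' K) (hB'fin.add hKfin)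
            have hchain : A'.ncard + 2 * B'.ncard ≤ 2 * S'.ncard := by
              calc A'.ncard + 2 * B'.ncard ≤ k * (π '' A').ncard + 2 * (k * (π '' B').ncard) := by
                    omega
                _ = k * ((π '' A').ncard + 2 * (π '' B').ncard) := by ring
                _ ≤ k * (2 * (π '' S').ncard) := Nat.mul_le_mul_left k IH2
                _ = 2 * (k * (π '' S').ncard) := by ring
                _ = 2 * S'.ncard := by rw [← hcount]
            omega
          · -- (iii-b) : impossible
            exfalso
            exact IH2 (myStab_image_mk_bot hS'fin)
          · -- (iii-c) : A' inside a coset of K, use endgame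
            obtain ⟨q, hq⟩ := Set.ncard_eq_one.1 IH2
            have hπa : π a ∈ π '' A' := ⟨a, haA', rfl⟩
            have hqa : q = π a := by
              rw [hq, Set.mem_singleton_iff] at hπa
              exact hπa.symm
            have hcoset : A' ⊆ {a} + (K : Set G) := by
              intro x hx
              have hπx : π x ∈ π '' A' := ⟨x, hx, rfl⟩
              rw [hq, hqa, Set.mem_singleton_iff, QuotientAddGroup.mk'_eq_mk'] at hπx
              obtain ⟨z, hz, hzeq⟩ := hπx
              exact ⟨a, rfl, -z, K.neg_mem hz, by rw [← hzeq]; exact add_neg_cancel_right x z⟩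
            have hA'k : A'.ncard ≤ k := by
              calc A'.ncard ≤ ({a} + (K : Set G)).ncard :=
                    Set.ncard_le_ncard hcoset ((Set.finite_singleton a).add hKfin)
                _ = k := ncard_singleton_add _ _
            have hsubend : {a} + B + (K : Set G) ⊆ A + B := by
              have h1 : {a} + B ⊆ A' + B' := Set.add_subset_add
                (by simpa using haA') Set.subset_union_left
              have h2 : {a} + B + (K : Set G) ⊆ S' + (K : Set G) :=
                Set.add_subset_add_right h1
              rw [hsat] at h2
              exact h2.trans hS'sub
            have hnst : ¬ K ≤ myStab (A + B) := by
              rw [← hS, hst]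
              intro hle
              exact hκ0 ((AddSubgroup.mem_bot).1 (hle hκK))
            have hend := endgame hAfin hBfin hBne hKfin (hA'sub haA') hsubend hnst
            rw [← hS] at hend
            omega
        · -- (ii) : |A'| = 1, impossible
          omega
    · -- case 1 : no valid transform; forces stabilizer, contradiction
      exfalso
      push_neg at hc1
      obtain ⟨a, a', ha, ha', hne⟩ := (Set.one_lt_ncard_iff hAfin).1 (by omega : 1 < A.ncard)
      have hstabB : B + {a' - a} = B := by
        apply Set.eq_of_subset_of_ncard_le
        · rintro x ⟨b, hb, z, hz, rfl⟩
          rw [Set.mem_singleton_iff] at hz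
          subst hz
          show b + (a' - a) ∈ B
          have hmem : a' + b ∈ B + {a} := hc1 a ha b hb ⟨a', ha', b, rfl, rfl⟩
          obtain ⟨b', hb', a'', ha'', heq⟩ := hmem
          rw [Set.mem_singleton_iff] at ha''
          have h4 : b' + a = a' + b := by rw [← ha'']; exact heq
          have h5 : b + (a' - a) = b' := by
            have h6 : b + (a' - a) = a' + b - a := by abel
            rw [h6, ← h4]
            exact add_sub_cancel_right b' a
          rwa [h5]
        · have : (B + {a' - a}).ncard = B.ncard := by
            rw [add_comm]; exact ncard_singleton_add _ _
          omega
        · exact hBfin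
      have hmemstab : a' - a ∈ myStab S := by
        rw [mem_myStab, hS, add_assoc, hstabB]
      rw [hst, AddSubgroup.mem_bot, sub_eq_zero] at hmemstab
      exact hne hmemstab.symm


lemma main_aux : ∀ (n : ℕ) (G : Type u) (_ : AddCommGroup G) (A B : Set G),
    A.Finite → B.Finite → A.Nonempty → B.Nonempty → A + B ≠ Set.univ →
    (∀ (H : AddSubgroup G) (x : G), A ⊆ x +ᵥ (H : Set G) → H = ⊤) →
    ((A + B).ncard ≤ n) →
    A.ncard + 2 * B.ncard ≤ 2 * (A + B).ncard := by
  intro n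
  induction n using Nat.strong_induction_on with
  | _ n ih =>
    intro G instG A B hAfin hBfin hAne hBne hAB hclosure hmeas
    set S := A + B with hS
    have hSfin : S.Finite := hAfin.add hBfin
    have hSne : S.Nonempty := hAne.add hBne
    set H := myStab S with hH
    have hSsat : S + (H : Set G) = S := add_coe_eq_of_le_myStab le_rfl
    by_cases hHbot : H = ⊥
    · -- use the Olson-type disjunction
      rcases omega_lemma (S.ncard * (S.ncard + 1) + A.ncard) G instG A B hAfin hBfin
        hAne hBne le_rfl with h | h | h
      · exact h
      · exact absurd hHbot h
      · -- |A| = 1 : contradiction with closure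
        exfalso
        obtain ⟨a, ha⟩ := Set.ncard_eq_one.1 h
        have hsub : A ⊆ a +ᵥ ((⊥ : AddSubgroup G) : Set G) := by
          intro x hx
          rw [ha, Set.mem_singleton_iff] at hx
          subst hx
          exact ⟨0, rfl, add_zero _⟩
        have hbot : (⊥ : AddSubgroup G) = ⊤ := hclosure ⊥ a hsub
        have hall : ∀ x : G, x = 0 := by
          intro x
          have : x ∈ (⊥ : AddSubgroup G) := by rw [hbot]; trivial
          exact this
        apply hAB
        obtain ⟨s, hs⟩ := hSne
        apply Set.eq_univ_of_forall
        intro g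
        rw [hall g, ← hall s]
        exact hs
    · -- stabilizer nontrivial : quotient
      by_cases hHtop : H = ⊤
      · exfalso
        apply hAB
        obtain ⟨s, hs⟩ := hSne
        apply Set.eq_univ_of_forall
        intro g
        have : g ∈ S + (H : Set G) :=
          ⟨s, hs, g - s, by rw [hHtop]; trivial, by show s + (g - s) = g; rw [add_comm]; exact sub_add_cancel g s⟩
        rwa [hSsat] at this
      have hHfin : ((H : AddSubgroup G) : Set G).Finite := myStab_finite hSfin hSne
      obtain ⟨κ, hκK, hκ0⟩ : ∃ x ∈ H, x ≠ 0 := by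
        by_contra hc
        push_neg at hc
        exact hHbot ((AddSubgroup.eq_bot_iff_forall H).2 hc)
      have hk2 : 2 ≤ (H : Set G).ncard := by
        have hsub2 : ({0, κ} : Set G) ⊆ (H : Set G) := by
          intro x hx
          rcases hx with rfl | hx
          · exact H.zero_mem
          · rw [Set.mem_singleton_iff] at hx; subst hx; exact hκK
        calc 2 = ({0, κ} : Set G).ncard := (Set.ncard_pair (Ne.symm hκ0)).symm
          _ ≤ (H : Set G).ncard := Set.ncard_le_ncard hsub2 hHfin
      set π := QuotientAddGroup.mk' H with hπ
      set h := (H : Set G).ncard with hhdef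
      have hcount : S.ncard = h * (π '' S).ncard := ncard_saturated hHfin hSfin hSsat
      have hπSfin : (π '' S).Finite := hSfin.image π
      have hπSne : (π '' S).Nonempty := hSne.image π
      have hπSpos : 0 < (π '' S).ncard := (Set.ncard_pos hπSfin).2 hπSne
      have hπSlt : (π '' S).ncard < S.ncard := by
        rw [hcount]
        calc (π '' S).ncard = 1 * (π '' S).ncard := (one_mul _).symm
          _ < h * (π '' S).ncard := (Nat.mul_lt_mul_right hπSpos).2 (by omega)
      have himg : π '' S = π '' A + π '' B := by rw [hS]; exact Set.image_add _
      have hπAfin : (π '' A).Finite := hAfin.image π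
      have hπBfin : (π '' B).Finite := hBfin.image π
      have hπAne : (π '' A).Nonempty := hAne.image π
      have hπBne : (π '' B).Nonempty := hBne.image π
      -- closure passes to quotient
      have hclosure' : ∀ (Hb : AddSubgroup (G ⧸ H)) (xb : G ⧸ H),
          π '' A ⊆ xb +ᵥ (Hb : Set (G ⧸ H)) → Hb = ⊤ := by
        intro Hb xb hsub
        obtain ⟨x, rfl⟩ := QuotientAddGroup.mk'_surjective H xb
        have hcomap : A ⊆ x +ᵥ ((Hb.comap π : AddSubgroup G) : Set G) := by
          intro a ha
          have hmem : π a ∈ (π x) +ᵥ (Hb : Set (G ⧸ H)) := hsub ⟨a, ha, rfl⟩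
          rw [Set.mem_vadd_set] at hmem
          obtain ⟨y, hy, hyeq⟩ := hmem
          rw [Set.mem_vadd_set]
          refine ⟨a - x, ?_, ?_⟩
          swap
          · show x + (a - x) = a
            rw [add_comm]
            exact sub_add_cancel a x
          show π (a - x) ∈ Hb
          have : π (a - x) = y := by
            rw [map_sub]
            have : π x + y = π a := hyeq
            rw [← this]
            abel
          rw [this]
          exact hy
        have htop := hclosure _ x hcomap
        rw [eq_top_iff]
        intro q _
        obtain ⟨g, rfl⟩ := QuotientAddGroup.mk'_surjective H q
        have : g ∈ Hb.comap π := by rw [htop]; trivial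
        exact this
      -- A+B ≠ univ passes to quotient
      have hAB' : π '' A + π '' B ≠ Set.univ := by
        intro hcontra
        apply hAB
        rw [← himg] at hcontra
        apply Set.eq_univ_of_forall
        intro g
        have : π g ∈ π '' S := by rw [hcontra]; trivial
        obtain ⟨s, hs, hseq⟩ := this
        rw [QuotientAddGroup.mk'_eq_mk'] at hseq
        obtain ⟨z, hz, rfl⟩ := hseq
        rw [← hSsat]
        exact ⟨s, hs, z, hz, rfl⟩
      have hmeasq : (π '' A + π '' B).ncard ≤ (π '' S).ncard := by
        rw [← himg]
      have IH := ih (π '' S).ncard (lt_of_lt_of_le hπSlt hmeas) (G ⧸ H) inferInstance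
        (π '' A) (π '' B) hπAfin hπBfin hπAne hπBne hAB' hclosure' hmeasq
      rw [← himg] at IH
      -- lift
      have hsatA : (A + (H : Set G)) + (H : Set G) = A + (H : Set G) := by
        rw [add_assoc, coeK_add_coeK]
      have hcountA : (A + (H : Set G)).ncard = h * (π '' A).ncard := by
        rw [ncard_saturated hHfin (hAfin.add hHfin) hsatA, image_add_coe]
      have hleA : A.ncard ≤ h * (π '' A).ncard := by
        rw [← hcountA]
        exact Set.ncard_le_ncard (subset_add_coe A H) (hAfin.add hHfin)
      have hsatB : (B + (H : Set G)) + (H : Set G) = B + (H : Set G) := by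
        rw [add_assoc, coeK_add_coeK]
      have hcountB : (B + (H : Set G)).ncard = h * (π '' B).ncard := by
        rw [ncard_saturated hHfin (hBfin.add hHfin) hsatB, image_add_coe]
      have hleB : B.ncard ≤ h * (π '' B).ncard := by
        rw [← hcountB]
        exact Set.ncard_le_ncard (subset_add_coe B H) (hBfin.add hHfin)
      calc A.ncard + 2 * B.ncard ≤ h * (π '' A).ncard + 2 * (h * (π '' B).ncard) := by omega
        _ = h * ((π '' A).ncard + 2 * (π '' B).ncard) := by ring
        _ ≤ h * (2 * (π '' S).ncard) := Nat.mul_le_mul_left h IH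
        _ = 2 * (h * (π '' S).ncard) := by ring
        _ = 2 * S.ncard := by rw [← hcount]

theorem stmt_8 {G : Type*} [AddCommGroup G]
    (A B : Set G) (hAfin : A.Finite) (hBfin : B.Finite)
    (hA : A.Nonempty) (hB : B.Nonempty) (hAB : A + B ≠ Set.univ)
    (hclosure : ∀ (H : AddSubgroup G) (x : G), A ⊆ x +ᵥ (H : Set G) → H = ⊤) :
    2 * (A + B).ncard ≥ A.ncard + 2 * B.ncard := by
  have h := main_aux (A + B).ncard G inferInstance A B hAfin hBfin hA hB hAB hclosure le_rfl
  exact h
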